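/- (Validity of Method 2: the congruence Gram matrix of 1 is positive definite.) Let I be an ideal of ℝ[x] = MvPolynomial (Fin n) ℝ, let h : Fin m → ℝ[x] be I-spherical, let κ ≥ 1, and let z : Fin d → ℝ[x]. Let P be a real matrix indexed by (Fin κ → Fin m) × Fin d with linearly independent columns (full column rank) such that for every multi-index f : Fin κ → Fin m, Σ_t P f t · z t − ∏_{s : Fin κ} h (f s) ∈ I (i.e., P z ≡ h^{⊗κ} mod I, entrywise). Then PᵀP is symmetric positive definite and is a Gram matrix for the constant polynomial 1 with respect to z mod I, i.e., 1 − Σ_{i,j} (PᵀP) i j · (z i)·(z j) ∈ I. -/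

import Mathlib

open MvPolynomial Matrix

/-- Validity of Method 2: if `P` has full column rank and `P z ≡ h^{⊗κ}` mod `I`
entrywise, with `h` an `I`-spherical family, then `PᵀP` is symmetric positive definite
and is a Gram matrix for the constant polynomial `1` with respect to `z` mod `I`. -/
theorem method2_valid {n m d : ℕ}
    (I : Ideal (MvPolynomial (Fin n) ℝ))
    (h : Fin m → MvPolynomial (Fin n) ℝ)
    (hsph : (∑ i, h i ^ 2) - 1 ∈ I)
    (κ : ℕ) (hκ : 1 ≤ κ)
    (z : Fin d → MvPolynomial (Fin n) ℝ)
    (P : Matrix (Fin κ → Fin m) (Fin d) ℝ)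
    (hP : LinearIndependent ℝ fun t : Fin d => fun f : Fin κ → Fin m => P f t)
    (hPz : ∀ f : Fin κ → Fin m, (∑ t, P f t • z t) - ∏ s, h (f s) ∈ I) :
    (Pᵀ * P)ᵀ = Pᵀ * P ∧ (Pᵀ * P).PosDef ∧
    (1 : MvPolynomial (Fin n) ℝ) - ∑ i, ∑ j, (Pᵀ * P) i j • (z i * z j) ∈ I := by
  have hsym : (Pᵀ * P)ᵀ = Pᵀ * P := by
    rw [Matrix.transpose_mul, Matrix.transpose_transpose]
  refine ⟨hsym, Matrix.posDef_iff_dotProduct_mulVec.mpr ⟨?_, ?_⟩, ?_⟩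
  · -- Hermitian
    show (Pᵀ * P)ᴴ = Pᵀ * P
    have : (Pᵀ * P)ᴴ = (Pᵀ * P)ᵀ := by
      ext i j; simp [Matrix.conjTranspose_apply]
    rw [this, hsym]
  · -- positivity
    intro x hx
    have hPx : P *ᵥ x ≠ 0 := by
      intro hc
      apply hx
      have := Fintype.linearIndependent_iff.mp hP x ?_
      · funext t; exact this t
      · funext f
        have := congrFun hc f
        simpa [Matrix.mulVec, dotProduct, mul_comm] using this
    have key : star x ⬝ᵥ (Pᵀ * P) *ᵥ x = (P *ᵥ x) ⬝ᵥ (P *ᵥ x) := by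
      rw [show star x = x from rfl, ← Matrix.mulVec_mulVec, Matrix.dotProduct_mulVec,
        Matrix.vecMul_transpose]
    rw [key]
    obtain ⟨f, hf⟩ := Function.ne_iff.mp hPx
    have : (0:ℝ) < ∑ g, (P *ᵥ x) g * (P *ᵥ x) g := by
      apply Finset.sum_pos' (fun g _ => mul_self_nonneg _)
      exact ⟨f, Finset.mem_univ f, mul_self_pos.mpr (by simpa using hf)⟩
    simpa [dotProduct] using this
  · -- Gram property
    set π := Ideal.Quotient.mk I with hπ
    rw [← Ideal.Quotient.eq_zero_iff_mem, map_sub]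
    have hval : ∀ f : Fin κ → Fin m, π (∑ t, P f t • z t) = π (∏ s, h (f s)) :=
      fun f => Ideal.Quotient.eq.mpr (hPz f)
    have hone : π (∑ i, h i ^ 2) = 1 := by
      have : π ((∑ i, h i ^ 2) - 1) = 0 := Ideal.Quotient.eq_zero_iff_mem.mpr hsph
      rw [map_sub, sub_eq_zero] at this
      simpa using this
    have h1 : ∀ f : Fin κ → Fin m, (∑ t, P f t • z t) * (∑ t, P f t • z t)
        = ∑ i, ∑ j, (P f i * P f j) • (z i * z j) := by
      intro f
      rw [Finset.sum_mul_sum]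
      exact Finset.sum_congr rfl fun i _ => Finset.sum_congr rfl fun j _ =>
        smul_mul_smul_comm (P f i) (z i) (P f j) (z j)
    have key : (∑ i, ∑ j, (Pᵀ * P) i j • (z i * z j))
        = ∑ f : Fin κ → Fin m, (∑ t, P f t • z t) * (∑ t, P f t • z t) := by
      simp only [h1, Matrix.mul_apply, Matrix.transpose_apply, Finset.sum_smul]
      calc ∑ i, ∑ j, ∑ f, (P f i * P f j) • (z i * z j)
          = ∑ i, ∑ f, ∑ j, (P f i * P f j) • (z i * z j) :=
            Finset.sum_congr rfl fun i _ => Finset.sum_comm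
        _ = ∑ f, ∑ i, ∑ j, (P f i * P f j) • (z i * z j) := Finset.sum_comm
    rw [key]
    have expand : (∑ i, h i ^ 2) ^ κ
        = ∑ f : Fin κ → Fin m, ∏ s : Fin κ, h (f s) ^ 2 := by
      rw [← Fin.prod_const κ (∑ i, h i ^ 2), Finset.prod_univ_sum]
      simp [Fintype.piFinset_univ]
    have hmain : π (∑ f : Fin κ → Fin m, (∑ t, P f t • z t) * (∑ t, P f t • z t))
        = π ((∑ i, h i ^ 2) ^ κ) := by
      rw [expand, map_sum, map_sum]
      refine Finset.sum_congr rfl fun f _ => ?_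
      rw [_root_.map_mul, hval f, ← _root_.map_mul, ← Finset.prod_mul_distrib]
      congr 1
      exact Finset.prod_congr rfl fun s _ => (sq (h (f s))).symm
    rw [hmain, map_pow, hone, one_pow]
    simp
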